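/- If P ⊆ F^2(T) is a set of filtered quadratic relations over B satisfying ⟨P⟩ ∩ F^1(T) = {0}, then there exist unique B-bimodule homomorphisms α : R → U and β : R → B, where R = π(P), such that P = { x − α(x) − β(x) : x ∈ R }. -/

import Mathlib

/- We model the tensor algebra `T = T_B(U)` over `B` abstractly: `T` is an
ℕ-graded `k`-algebra with `B = T⁰ = 𝒜 0` and `U = T¹ = 𝒜 1`;
`π : F²(T) → T²` is the projection `GradedAlgebra.proj 𝒜 2`. -/

/-- The `m`-th filtered component of a graded algebra. -/
def filt {k T : Type*} [CommSemiring k] [Ring T] [Algebra k T]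
    (𝒜 : ℕ → Submodule k T) (m : ℕ) : Submodule k T :=
  ⨆ i ≤ m, 𝒜 i

set_option linter.unusedSectionVars false

section Aux
variable {k T : Type*} [Field k] [Ring T] [Algebra k T]
  (𝒜 : ℕ → Submodule k T) [GradedAlgebra 𝒜]

lemma aux_proj_mem (j : ℕ) (x : T) : GradedAlgebra.proj 𝒜 j x ∈ 𝒜 j := by
  rw [GradedAlgebra.proj_apply]; exact SetLike.coe_mem _

lemma aux_mem_filt {i m : ℕ} (him : i ≤ m) {x : T} (hx : x ∈ 𝒜 i) : x ∈ filt 𝒜 m := by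
  exact (le_iSup₂ (f := fun i (_ : i ≤ m) => 𝒜 i) i him) hx

lemma aux_decomp {m : ℕ} {x : T} (hx : x ∈ filt 𝒜 m) :
    ∑ i ∈ Finset.range (m + 1), GradedAlgebra.proj 𝒜 i x = x := by
  have key : filt 𝒜 m ≤ LinearMap.ker
      ((∑ i ∈ Finset.range (m + 1), GradedAlgebra.proj 𝒜 i) - LinearMap.id) := by
    refine iSup₂_le fun i hi => fun y hy => ?_
    rw [LinearMap.mem_ker, LinearMap.sub_apply, LinearMap.id_apply, sub_eq_zero,
      LinearMap.sum_apply, Finset.sum_eq_single i]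
    · rw [GradedAlgebra.proj_apply, DirectSum.decompose_of_mem_same 𝒜 hy]
    · intro j _ hj
      rw [GradedAlgebra.proj_apply, DirectSum.decompose_of_mem_ne 𝒜 hy (Ne.symm hj)]
    · intro h; exact absurd (Finset.mem_range.2 (Nat.lt_succ_of_le hi)) h
  have := key hx
  rw [LinearMap.mem_ker, LinearMap.sub_apply, LinearMap.id_apply, sub_eq_zero,
    LinearMap.sum_apply] at this
  exact this

lemma aux_conj_mem {a b : T} (ha : a ∈ 𝒜 0) (hb : b ∈ 𝒜 0) {j : ℕ} {x : T}
    (hx : x ∈ 𝒜 j) : a * x * b ∈ 𝒜 j := by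
  have h1 : a * x ∈ 𝒜 (0 + j) := SetLike.mul_mem_graded ha hx
  have h2 : a * x * b ∈ 𝒜 (0 + j + 0) := SetLike.mul_mem_graded h1 hb
  simpa using h2

lemma aux_proj_conj {a b : T} (ha : a ∈ 𝒜 0) (hb : b ∈ 𝒜 0) (j : ℕ) (x : T) :
    GradedAlgebra.proj 𝒜 j (a * x * b) = a * GradedAlgebra.proj 𝒜 j x * b := by
  induction x using DirectSum.Decomposition.inductionOn 𝒜 with
  | zero => simp
  | @homogeneous i m =>
    by_cases h : i = j
    · subst h
      rw [GradedAlgebra.proj_apply, GradedAlgebra.proj_apply,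
        DirectSum.decompose_of_mem_same 𝒜 (aux_conj_mem 𝒜 ha hb m.2),
        DirectSum.decompose_of_mem_same 𝒜 m.2]
    · rw [GradedAlgebra.proj_apply, GradedAlgebra.proj_apply,
        DirectSum.decompose_of_mem_ne 𝒜 (aux_conj_mem 𝒜 ha hb m.2) h,
        DirectSum.decompose_of_mem_ne 𝒜 m.2 h, mul_zero, zero_mul]
  | add y z hy hz =>
    rw [mul_add, add_mul, map_add, hy, hz, map_add, mul_add, add_mul]

end Aux

/-- if `P ⊆ F²(T)` is a `B`-subbimodule of filtered quadratic
relations with `⟨P⟩ ∩ F¹(T) = {0}` (here already `P ∩ F¹(T) = {0}` is the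
relevant consequence, Condition (I)), then there is a unique pair of
`B`-bimodule homomorphisms `α : R → U`, `β : R → B`, where `R = π(P)`, with
`P = { x − α(x) − β(x) : x ∈ R }`. -/
theorem stmt14 {k T : Type*} [Field k] [Ring T] [Algebra k T]
    (𝒜 : ℕ → Submodule k T) [GradedAlgebra 𝒜]
    (P : Submodule k T) (hP2 : P ≤ filt 𝒜 2)
    (hbi : ∀ a ∈ 𝒜 0, ∀ b ∈ 𝒜 0, ∀ x ∈ P, a * x * b ∈ P)
    (hI : P ⊓ filt 𝒜 1 = ⊥) :
    letI R : Submodule k T := Submodule.map (GradedAlgebra.proj 𝒜 2) P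
    ∃! αβ : ↥R →ₗ[k] T × T,
      (∀ x : ↥R, (αβ x).1 ∈ 𝒜 1 ∧ (αβ x).2 ∈ 𝒜 0) ∧
      (∀ a ∈ 𝒜 0, ∀ b ∈ 𝒜 0, ∀ (x : ↥R) (hx : a * (x : T) * b ∈ R),
        αβ ⟨a * (x : T) * b, hx⟩ = (a * (αβ x).1 * b, a * (αβ x).2 * b)) ∧
      (P : Set T) = {y | ∃ x : ↥R, y = (x : T) - (αβ x).1 - (αβ x).2} := by
  set R : Submodule k T := Submodule.map (GradedAlgebra.proj 𝒜 2) P with hRdef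
  -- decomposition for elements of P
  have hPdec : ∀ x ∈ P, GradedAlgebra.proj 𝒜 0 x + GradedAlgebra.proj 𝒜 1 x
      + GradedAlgebra.proj 𝒜 2 x = x := by
    intro x hx
    have := aux_decomp 𝒜 (hP2 hx)
    simpa [Finset.sum_range_succ] using this
  -- the map φ : P → R
  set φ : ↥P →ₗ[k] ↥R :=
    LinearMap.codRestrict R ((GradedAlgebra.proj 𝒜 2).comp P.subtype)
      (fun x => Submodule.mem_map_of_mem x.2) with hφdef
  have hφcoe : ∀ x : ↥P, (φ x : T) = GradedAlgebra.proj 𝒜 2 (x : T) := fun x => rfl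
  have hφinj : Function.Injective φ := by
    intro x y hxy
    have h : GradedAlgebra.proj 𝒜 2 ((x : T) - y) = 0 := by
      rw [map_sub, ← hφcoe, ← hφcoe, hxy, sub_self]
    have hmem : ((x : T) - y) ∈ P := sub_mem x.2 y.2
    have hfilt : ((x : T) - y) ∈ filt 𝒜 1 := by
      have := hPdec _ hmem
      rw [h, add_zero] at this
      rw [← this]
      exact add_mem (aux_mem_filt 𝒜 (by norm_num) (aux_proj_mem 𝒜 0 _))
        (aux_mem_filt 𝒜 le_rfl (aux_proj_mem 𝒜 1 _))
    have : ((x : T) - y) ∈ P ⊓ filt 𝒜 1 := ⟨hmem, hfilt⟩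
    rw [hI, Submodule.mem_bot, sub_eq_zero] at this
    exact Subtype.ext this
  have hφsurj : Function.Surjective φ := by
    rintro ⟨y, x, hx, hxy⟩
    exact ⟨⟨x, hx⟩, Subtype.ext hxy⟩
  set e : ↥P ≃ₗ[k] ↥R := LinearEquiv.ofBijective φ ⟨hφinj, hφsurj⟩ with hedef
  have hecoe : ∀ x : ↥P, (e x : T) = GradedAlgebra.proj 𝒜 2 (x : T) := fun x => rfl
  have hp2symm : ∀ r : ↥R, GradedAlgebra.proj 𝒜 2 ((e.symm r : T)) = (r : T) := by
    intro r
    rw [← hecoe, e.apply_symm_apply]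
  -- the candidate
  set αβ : ↥R →ₗ[k] T × T :=
    LinearMap.prod
      (-((GradedAlgebra.proj 𝒜 1).comp (P.subtype.comp e.symm.toLinearMap)))
      (-((GradedAlgebra.proj 𝒜 0).comp (P.subtype.comp e.symm.toLinearMap))) with hαβ
  have hαβ1 : ∀ r : ↥R, (αβ r).1 = -(GradedAlgebra.proj 𝒜 1 (e.symm r : T)) := fun r => rfl
  have hαβ2 : ∀ r : ↥R, (αβ r).2 = -(GradedAlgebra.proj 𝒜 0 (e.symm r : T)) := fun r => rfl
  have hkey : ∀ r : ↥R, ((e.symm r : T)) = (r : T) - (αβ r).1 - (αβ r).2 := by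
    intro r
    rw [hαβ1, hαβ2, sub_neg_eq_add, sub_neg_eq_add]
    have := hPdec _ (e.symm r).2
    rw [hp2symm r] at this
    conv_lhs => rw [← this]
    abel
  refine ⟨αβ, ⟨?_, ?_, ?_⟩, ?_⟩
  · intro r
    exact ⟨by rw [hαβ1]; exact neg_mem (aux_proj_mem 𝒜 1 _),
      by rw [hαβ2]; exact neg_mem (aux_proj_mem 𝒜 0 _)⟩
  · intro a ha b hb r hr
    set x : ↥P := e.symm r with hxdef
    have habP : a * (x : T) * b ∈ P := hbi a ha b hb _ x.2
    have h2 : GradedAlgebra.proj 𝒜 2 (a * (x : T) * b) = a * (r : T) * b := by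
      rw [aux_proj_conj 𝒜 ha hb, hp2symm]
    have heq : e ⟨a * (x : T) * b, habP⟩ = ⟨a * (r : T) * b, hr⟩ := Subtype.ext h2
    have hsymm : e.symm ⟨a * (r : T) * b, hr⟩ = ⟨a * (x : T) * b, habP⟩ := by
      rw [← heq, e.symm_apply_apply]
    refine Prod.ext ?_ ?_
    · rw [hαβ1, hαβ1, hsymm]
      show -(GradedAlgebra.proj 𝒜 1 (a * (x : T) * b)) = _
      rw [aux_proj_conj 𝒜 ha hb, mul_neg, neg_mul]
    · rw [hαβ2, hαβ2, hsymm]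
      show -(GradedAlgebra.proj 𝒜 0 (a * (x : T) * b)) = _
      rw [aux_proj_conj 𝒜 ha hb, mul_neg, neg_mul]
  · ext y
    constructor
    · intro hy
      exact ⟨e ⟨y, hy⟩, by rw [← hkey, e.symm_apply_apply]⟩
    · rintro ⟨r, rfl⟩
      rw [← hkey]
      exact (e.symm r).2
  · -- uniqueness
    rintro αβ' ⟨h1', h2', h3'⟩
    refine LinearMap.ext fun r => ?_
    have hm' : ((r : T) - (αβ' r).1 - (αβ' r).2) ∈ P := by
      have : ((r : T) - (αβ' r).1 - (αβ' r).2) ∈ (P : Set T) := by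
        rw [h3']; exact ⟨r, rfl⟩
      exact this
    have hm : ((r : T) - (αβ r).1 - (αβ r).2) ∈ P := by
      rw [← hkey]; exact (e.symm r).2
    set u : T := (αβ' r).1 - (αβ r).1 with hu
    set v : T := (αβ' r).2 - (αβ r).2 with hv
    have hu1 : u ∈ 𝒜 1 := sub_mem (h1' r).1 (by rw [hαβ1]; exact neg_mem (aux_proj_mem 𝒜 1 _))
    have hv0 : v ∈ 𝒜 0 := sub_mem (h1' r).2 (by rw [hαβ2]; exact neg_mem (aux_proj_mem 𝒜 0 _))
    have hsum : u + v ∈ P ⊓ filt 𝒜 1 := by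
      constructor
      · have : u + v = ((r : T) - (αβ r).1 - (αβ r).2)
            - ((r : T) - (αβ' r).1 - (αβ' r).2) := by rw [hu, hv]; abel
        rw [this]
        exact sub_mem hm hm'
      · exact add_mem (aux_mem_filt 𝒜 le_rfl hu1) (aux_mem_filt 𝒜 (by norm_num) hv0)
    rw [hI, Submodule.mem_bot] at hsum
    have hu0 : u = 0 := by
      have h01 : GradedAlgebra.proj 𝒜 1 (u + v) = u := by
        rw [map_add, GradedAlgebra.proj_apply, GradedAlgebra.proj_apply,
          DirectSum.decompose_of_mem_same 𝒜 hu1,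
          DirectSum.decompose_of_mem_ne 𝒜 hv0 (by norm_num), add_zero]
      rw [hsum, map_zero] at h01
      exact h01.symm
    have hv0' : v = 0 := by
      have := hsum
      rw [hu0, zero_add] at this
      exact this
    have e1 : (αβ' r).1 = (αβ r).1 := by
      have := hu0; rw [hu, sub_eq_zero] at this; exact this
    have e2 : (αβ' r).2 = (αβ r).2 := by
      have := hv0'; rw [hv, sub_eq_zero] at this; exact this
    exact Prod.ext e1 e2
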